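/- Let B ⊆ Ped(A) be a dense *-subalgebra of a C*-algebra A contained in the Pedersen ideal. If two tracial weights τ, ω on A satisfy τ|_B = ω|_B, then τ = ω. -/

import Mathlib

open scoped ENNReal NNReal ComplexOrder

/-- A (densely defined, lower semicontinuous) tracial weight on a C*-algebra. -/
structure TracialWeight (A : Type*) [NonUnitalCStarAlgebra A]
    [PartialOrder A] [StarOrderedRing A] where
  toFun : A → ℝ≥0∞
  map_add : ∀ x y : A, 0 ≤ x → 0 ≤ y → toFun (x + y) = toFun x + toFun y
  map_smul : ∀ (r : ℝ≥0) (x : A), 0 ≤ x → toFun (((r : ℝ) : ℂ) • x) = (r : ℝ≥0∞) * toFun x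
  lsc : LowerSemicontinuous toFun
  tracial : ∀ x : A, toFun (star x * x) = toFun (x * star x)
  densely_defined : Dense ((Submodule.span ℂ {x : A | 0 ≤ x ∧ toFun x < ⊤}) : Set A)

/-- `P` is the Pedersen ideal of `A`: the minimal dense (algebraic two-sided) ideal. -/
def IsPedersenIdeal {A : Type*} [NonUnitalCStarAlgebra A] (P : Submodule ℂ A) : Prop :=
  Dense (P : Set A) ∧ (∀ a : A, ∀ x ∈ P, a * x ∈ P ∧ x * a ∈ P) ∧
    ∀ Q : Submodule ℂ A, Dense (Q : Set A) →
      (∀ a : A, ∀ x ∈ Q, a * x ∈ Q ∧ x * a ∈ Q) → P ≤ Q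

namespace TWAux

variable {A : Type*} [NonUnitalCStarAlgebra A] [PartialOrder A] [StarOrderedRing A]

lemma tw_smul (τ : TracialWeight A) (r : ℝ) (hr : 0 ≤ r) (x : A) (hx : 0 ≤ x) :
    τ.toFun (r • x) = ENNReal.ofReal r * τ.toFun x := by
  have h := τ.map_smul r.toNNReal x hx
  rw [Real.coe_toNNReal r hr, Complex.coe_smul] at h
  exact h

lemma tw_mono (τ : TracialWeight A) {x y : A} (hx : 0 ≤ x) (hxy : x ≤ y) :
    τ.toFun x ≤ τ.toFun y := by
  have h : y = x + (y - x) := by abel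
  rw [h, τ.map_add x (y - x) hx (by rwa [sub_nonneg])]
  exact le_self_add

lemma smul_nonneg' (r : ℝ) (hr : 0 ≤ r) {s : A} (hs : 0 ≤ s) : 0 ≤ r • s := by
  have hsa : star (CFC.sqrt s) = CFC.sqrt s :=
    (IsSelfAdjoint.of_nonneg (CFC.sqrt_nonneg (a := s))).star_eq
  have h1 : r • s = star (Real.sqrt r • CFC.sqrt s) * (Real.sqrt r • CFC.sqrt s) := by
    rw [star_smul, star_trivial, hsa, smul_mul_smul_comm, Real.mul_self_sqrt hr,
      CFC.sqrt_mul_sqrt_self s hs]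
  rw [h1]; exact star_mul_self_nonneg _

/-- additive over finite sums of nonneg elements -/
lemma tw_sum (τ : TracialWeight A) {ι : Type*} (s : Finset ι) (f : ι → A)
    (hf : ∀ i ∈ s, 0 ≤ f i) :
    τ.toFun (∑ i ∈ s, f i) = ∑ i ∈ s, τ.toFun (f i) := by
  classical
  induction s using Finset.cons_induction with
  | empty =>
    simp only [Finset.sum_empty]
    have h := τ.map_smul 0 0 le_rfl
    simpa using h
  | cons a s ha ih =>
    rw [Finset.sum_cons, Finset.sum_cons,
      τ.map_add _ _ (hf a (Finset.mem_cons_self a s))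
        (Finset.sum_nonneg fun i hi => hf i (Finset.mem_cons_of_mem hi)),
      ih fun i hi => hf i (Finset.mem_cons_of_mem hi)]

end TWAux

namespace TWAux
variable {A : Type*} [NonUnitalCStarAlgebra A] [PartialOrder A] [StarOrderedRing A]

lemma finite_of_mem_span (τ : TracialWeight A) {x : A}
    (hx : x ∈ Submodule.span ℂ {y : A | 0 ≤ y ∧ τ.toFun y < ⊤}) (hx0 : 0 ≤ x) :
    τ.toFun x < ⊤ := by
  obtain ⟨n, f, g, hsum⟩ := Submodule.mem_span_set'.mp hx
  have hxsa : star x = x := (IsSelfAdjoint.of_nonneg hx0).star_eq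
  set c : Fin n → ℝ := fun i => (f i).re with hc
  have hrepr : x = ∑ i, (c i) • (g i : A) := by
    have hstar : x = ∑ i, (starRingEnd ℂ (f i)) • (g i : A) := by
      conv_lhs => rw [← hxsa, ← hsum]
      rw [star_sum]
      refine Finset.sum_congr rfl fun i _ => ?_
      rw [star_smul, (IsSelfAdjoint.of_nonneg (g i).2.1).star_eq]
      rfl
    have h2 : (2 : ℝ) • x = ∑ i, ((2 * c i : ℝ) : ℂ) • (g i : A) := by
      have :  ((2:ℝ) • x : A) = x + x := by
        rw [two_smul]
      rw [this]
      nth_rewrite 2 [hstar]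
      nth_rewrite 1 [← hsum]
      rw [← Finset.sum_add_distrib]
      refine Finset.sum_congr rfl fun i _ => ?_
      rw [← add_smul]
      congr 1
      rw [Complex.add_conj]
    have h3 : (2 : ℝ) • x = ∑ i, ((2 * c i : ℝ)) • (g i : A) := by
      rw [h2]
      exact Finset.sum_congr rfl fun i _ => by rw [Complex.coe_smul]
    have := congrArg (fun z => ((2:ℝ)⁻¹) • z) h3
    simpa [smul_smul, Finset.smul_sum, mul_assoc] using this
  set y : A := ∑ i, (max (c i) 0) • (g i : A) with hy
  have hterm : ∀ i : Fin n, 0 ≤ (max (c i) 0) • (g i : A) := fun i =>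
    smul_nonneg' _ (le_max_right _ _) (g i).2.1
  have hyx : x ≤ y := by
    rw [← sub_nonneg, hrepr, hy, ← Finset.sum_sub_distrib]
    refine Finset.sum_nonneg fun i _ => ?_
    rw [← sub_smul]
    exact smul_nonneg' _ (by simp [le_max_left]) (g i).2.1
  refine lt_of_le_of_lt (tw_mono τ hx0 hyx) ?_
  rw [hy, tw_sum τ _ _ fun i _ => hterm i]
  refine ENNReal.sum_lt_top.mpr fun i _ => ?_
  rw [tw_smul τ _ (le_max_right _ _) _ (g i).2.1]
  exact ENNReal.mul_lt_top ENNReal.ofReal_lt_top (g i).2.2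

end TWAux

namespace TWAux
variable {A : Type*} [NonUnitalCStarAlgebra A] [PartialOrder A] [StarOrderedRing A]

/-- The span of the finite-positive cone. -/
noncomputable def dom (τ : TracialWeight A) : Submodule ℂ A :=
  Submodule.span ℂ {y : A | 0 ≤ y ∧ τ.toFun y < ⊤}

lemma mul_gen_mem (τ : TracialWeight A) (a : A) {s : A} (hs0 : 0 ≤ s)
    (hsfin : τ.toFun s < ⊤) : a * s ∈ dom τ := by
  set y := CFC.sqrt s with hydef
  have hy0 : 0 ≤ y := CFC.sqrt_nonneg s
  have hyy : y * y = s := CFC.sqrt_mul_sqrt_self s hs0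
  have hysa : star y = y := (IsSelfAdjoint.of_nonneg hy0).star_eq
  set u := a * y with hudef
  -- each polarization term is a generator
  have key : ∀ c : ℂ, star c * c = 1 →
      (u + c • y) * star (u + c • y) ∈ {y : A | 0 ≤ y ∧ τ.toFun y < ⊤} := by
    intro c hc
    set z := u + c • y with hz
    refine ⟨mul_star_self_nonneg z, ?_⟩
    have htr : τ.toFun (z * star z) = τ.toFun (star z * z) := by
      have := τ.tracial (star z)
      rwa [star_star] at this
    have hw : star (c • y) * (c • y) = s := by
      rw [star_smul, hysa, smul_mul_smul_comm, hc, one_smul, hyy]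
    -- star z * z ≤ 2 • (star u * u + s)
    have hexp : star z * z + star (u - c • y) * (u - c • y)
        = (2:ℝ) • (star u * u + star (c • y) * (c • y)) := by
      rw [hz]
      simp only [star_add, star_sub, mul_add, add_mul, mul_sub, sub_mul, two_smul, smul_add]
      abel
    have hle : star z * z ≤ (2:ℝ) • (star u * u + s) := by
      rw [← hw]
      rw [← sub_nonneg]
      have : (2:ℝ) • (star u * u + star (c • y) * (c • y)) - star z * z
          = star (u - c • y) * (u - c • y) := by rw [← hexp]; abel
      rw [this]
      exact star_mul_self_nonneg _
    -- star u * u ≤ ‖star a * a‖ • s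
    have huu : star u * u = star y * (star a * a) * y := by
      rw [hudef, star_mul]
      noncomm_ring
    have huu_le : star u * u ≤ ‖star a * a‖ • s := by
      rw [huu, ← hyy]
      calc star y * (star a * a) * y ≤ ‖star a * a‖ • (star y * y) :=
            CStarAlgebra.star_left_conjugate_le_norm_smul (IsSelfAdjoint.star_mul_self a)
        _ = ‖star a * a‖ • (y * y) := by rw [hysa]
    have huu0 : (0:A) ≤ star u * u := star_mul_self_nonneg u
    have huufin : τ.toFun (star u * u) < ⊤ := by
      refine lt_of_le_of_lt (tw_mono τ huu0 huu_le) ?_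
      rw [tw_smul τ _ (norm_nonneg _) _ hs0]
      exact ENNReal.mul_lt_top ENNReal.ofReal_lt_top hsfin
    rw [htr]
    refine lt_of_le_of_lt (tw_mono τ (star_mul_self_nonneg z) hle) ?_
    rw [tw_smul τ _ (by norm_num) _ (add_nonneg huu0 hs0),
      τ.map_add _ _ huu0 hs0]
    exact ENNReal.mul_lt_top ENNReal.ofReal_lt_top (ENNReal.add_lt_top.mpr ⟨huufin, hsfin⟩)
  -- polarization
  have hpol : (4:ℂ) • (u * y) = ((u + y) * star (u + y))
      + Complex.I • ((u + Complex.I • y) * star (u + Complex.I • y))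
      - ((u - y) * star (u - y))
      - Complex.I • ((u - Complex.I • y) * star (u - Complex.I • y)) := by
    simp only [star_add, star_sub, star_smul, Complex.star_def, Complex.conj_I, hysa, neg_smul,
      mul_add, add_mul, mul_sub, sub_mul, smul_add, smul_sub, smul_smul, mul_smul_comm,
      smul_mul_assoc, mul_neg, neg_mul, smul_neg, Complex.I_mul_I, neg_neg, one_smul, neg_one_smul]
    module
  have hmem : ∀ c : ℂ, star c * c = 1 → (u + c • y) * star (u + c • y) ∈ dom τ :=
    fun c hc => Submodule.subset_span (key c hc)
  have h1 := hmem 1 (by norm_num)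
  have hI := hmem Complex.I (by simp [Complex.star_def, Complex.conj_I, Complex.I_mul_I])
  have hm1 := hmem (-1) (by norm_num)
  have hmI := hmem (-Complex.I) (by
    simp [Complex.star_def, Complex.conj_I, Complex.I_mul_I])
  rw [one_smul] at h1
  rw [neg_one_smul] at hm1
  rw [neg_smul] at hmI
  have hsub : ∀ c : A, u + -c = u - c := fun c => by abel
  rw [hsub] at hm1 hmI
  have has : a * s = (4:ℂ)⁻¹ • ((4:ℂ) • (u * y)) := by
    rw [smul_smul]
    norm_num
    rw [hudef, mul_assoc, hyy]
  rw [has, hpol]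
  exact Submodule.smul_mem _ _ (Submodule.sub_mem _ (Submodule.sub_mem _
    (Submodule.add_mem _ h1 (Submodule.smul_mem _ _ hI)) hm1) (Submodule.smul_mem _ _ hmI))

lemma star_mem_dom (τ : TracialWeight A) {x : A} (hx : x ∈ dom τ) : star x ∈ dom τ := by
  induction hx using Submodule.span_induction with
  | mem y hy => exact Submodule.subset_span (by
      rwa [Set.mem_setOf_eq.mp hy |>.1 |> IsSelfAdjoint.of_nonneg |>.star_eq])
  | zero => simpa using Submodule.zero_mem _
  | add y z _ _ hy hz => rw [star_add]; exact Submodule.add_mem _ hy hz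
  | smul c y _ hy => rw [star_smul]; exact Submodule.smul_mem _ _ hy

lemma dom_ideal (τ : TracialWeight A) :
    ∀ a : A, ∀ x ∈ dom τ, a * x ∈ dom τ ∧ x * a ∈ dom τ := by
  have hleft : ∀ a : A, ∀ x ∈ dom τ, a * x ∈ dom τ := by
    intro a x hx
    induction hx using Submodule.span_induction with
    | mem y hy => exact mul_gen_mem τ a hy.1 hy.2
    | zero => simpa using Submodule.zero_mem _
    | add y z _ _ hy hz => rw [mul_add]; exact Submodule.add_mem _ hy hz
    | smul c y _ hy => rw [mul_smul_comm]; exact Submodule.smul_mem _ _ hy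
  intro a x hx
  refine ⟨hleft a x hx, ?_⟩
  have : x * a = star (star a * star x) := by simp
  rw [this]
  exact star_mem_dom τ (hleft (star a) (star x) (star_mem_dom τ hx))

lemma finite_on_pedersen (τ : TracialWeight A) {P : Submodule ℂ A} (hP : IsPedersenIdeal P)
    {x : A} (hxP : x ∈ P) (hx0 : 0 ≤ x) : τ.toFun x < ⊤ :=
  finite_of_mem_span τ (hP.2.2 (dom τ) τ.densely_defined (dom_ideal τ) hxP) hx0

end TWAux

namespace TWAux
variable {A : Type*} [NonUnitalCStarAlgebra A] [PartialOrder A] [StarOrderedRing A]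

lemma corner_bound (ω : TracialWeight A) (c x : A) (hx : 0 ≤ x) :
    ω.toFun (star c * x * c) ≤ ENNReal.ofReal (‖c‖ * ‖c‖) * ω.toFun x := by
  set y := CFC.sqrt x with hydef
  have hy0 : 0 ≤ y := CFC.sqrt_nonneg x
  have hyy : y * y = x := CFC.sqrt_mul_sqrt_self x hx
  have hysa : star y = y := (IsSelfAdjoint.of_nonneg hy0).star_eq
  have h1 : star c * x * c = star (y * c) * (y * c) := by
    rw [star_mul, hysa, ← hyy]; noncomm_ring
  have h2 : (y * c) * star (y * c) = y * (c * star c) * y := by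
    rw [star_mul, hysa]; noncomm_ring
  have h3 : ω.toFun (star c * x * c) = ω.toFun (y * (c * star c) * y) := by
    rw [h1, ω.tracial (y * c), h2]
  have h4 : y * (c * star c) * y ≤ ‖c * star c‖ • (y * y) := by
    have := CStarAlgebra.star_left_conjugate_le_norm_smul
      (a := y) (b := c * star c) (IsSelfAdjoint.mul_star_self c)
    rwa [hysa] at this
  have h5 : (0:A) ≤ y * (c * star c) * y := by
    have := star_left_conjugate_nonneg (mul_star_self_nonneg c) y
    rwa [hysa] at this
  rw [h3]
  refine le_trans (tw_mono ω h5 h4) ?_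
  rw [hyy, tw_smul ω _ (norm_nonneg _) _ hx, CStarRing.norm_self_mul_star]

lemma corner_diff (τ : TracialWeight A) (b : A) {x₁ x₂ : A} (h1 : 0 ≤ x₁) (h2 : 0 ≤ x₂) :
    τ.toFun (star b * x₁ * b)
      ≤ τ.toFun (star b * x₂ * b) + ENNReal.ofReal ‖x₁ - x₂‖ * τ.toFun (star b * b) := by
  have hsa : IsSelfAdjoint (x₁ - x₂) :=
    (IsSelfAdjoint.of_nonneg h1).sub (IsSelfAdjoint.of_nonneg h2)
  have hkey : star b * x₁ * b ≤ star b * x₂ * b + ‖x₁ - x₂‖ • (star b * b) := by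
    rw [← sub_le_iff_le_add']
    calc star b * x₁ * b - star b * x₂ * b = star b * (x₁ - x₂) * b := by noncomm_ring
      _ ≤ ‖x₁ - x₂‖ • (star b * b) := CStarAlgebra.star_left_conjugate_le_norm_smul hsa
  refine le_trans (tw_mono τ (star_left_conjugate_nonneg h1 b) hkey) ?_
  rw [τ.map_add _ _ (star_left_conjugate_nonneg h2 b)
      (smul_nonneg' _ (norm_nonneg _) (star_mul_self_nonneg b)),
    tw_smul τ _ (norm_nonneg _) _ (star_mul_self_nonneg b)]

lemma corner_le (B : NonUnitalStarSubalgebra ℂ A) (hdense : Dense (B : Set A))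
    (τ ω : TracialWeight A)
    (hagree : ∀ x ∈ B, 0 ≤ x → τ.toFun x = ω.toFun x)
    {b : A} (hb : b ∈ B)
    (hτfin : τ.toFun (star b * b) < ⊤) (hωfin : ω.toFun (star b * b) < ⊤)
    (x : A) (hx : 0 ≤ x) :
    τ.toFun (star b * x * b) ≤ ω.toFun (star b * x * b) := by
  set y := CFC.sqrt x with hydef
  have hy0 : 0 ≤ y := CFC.sqrt_nonneg x
  have hyy : y * y = x := CFC.sqrt_mul_sqrt_self x hx
  have hysa : star y = y := (IsSelfAdjoint.of_nonneg hy0).star_eq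
  -- approximating sequence in B
  have hexists : ∀ n : ℕ, ∃ v : A, v ∈ (B : Set A) ∧ dist y v < 1/(n+1) := by
    intro n
    obtain ⟨v, hv1, hv2⟩ := Metric.dense_iff.mp hdense y (1/(n+1)) (by positivity)
    exact ⟨v, hv2, by simpa [dist_comm] using hv1⟩
  choose v hvB hvd using hexists
  set xn : ℕ → A := fun n => star (v n) * (v n) with hxn
  have hxnB : ∀ n, xn n ∈ B := fun n => mul_mem (star_mem (hvB n)) (hvB n)
  have hxn0 : ∀ n, (0:A) ≤ xn n := fun n => star_mul_self_nonneg _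
  have hvt : Filter.Tendsto v Filter.atTop (nhds y) := by
    rw [tendsto_iff_dist_tendsto_zero]
    refine squeeze_zero (g := fun n : ℕ => 1/(n+1)) (fun n => dist_nonneg)
      (fun n => le_of_lt (by rw [dist_comm]; exact hvd n))
      tendsto_one_div_add_atTop_nhds_zero_nat
  have hxt : Filter.Tendsto xn Filter.atTop (nhds x) := by
    have : Filter.Tendsto (fun n => star (v n) * v n) Filter.atTop (nhds (star y * y)) :=
      ((continuous_star.tendsto y).comp hvt).mul hvt
    rwa [hysa, hyy] at this
  have hnt : Filter.Tendsto (fun n => ENNReal.ofReal ‖x - xn n‖) Filter.atTop (nhds 0) := by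
    have h1 : Filter.Tendsto (fun n => ‖xn n - x‖) Filter.atTop (nhds 0) := by
      rw [← tendsto_iff_norm_sub_tendsto_zero]; exact hxt
    have h2 : Filter.Tendsto (fun n => ‖x - xn n‖) Filter.atTop (nhds 0) := by
      simpa [norm_sub_rev] using h1
    have := (ENNReal.continuous_ofReal.tendsto 0).comp h2
    simpa [Function.comp_def] using this
  set C : ℝ≥0∞ := τ.toFun (star b * b) + ω.toFun (star b * b) with hC
  have hCfin : C ≠ ⊤ := by
    simp only [hC, ne_eq, ENNReal.add_eq_top, not_or]
    exact ⟨hτfin.ne, hωfin.ne⟩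
  have hbound : ∀ n, τ.toFun (star b * x * b)
      ≤ ω.toFun (star b * x * b) + ENNReal.ofReal ‖x - xn n‖ * C := by
    intro n
    have e1 := corner_diff τ b hx (hxn0 n)
    have e2 : τ.toFun (star b * xn n * b) = ω.toFun (star b * xn n * b) := by
      refine hagree _ (mul_mem (mul_mem (star_mem hb) (hxnB n)) hb) (star_left_conjugate_nonneg (hxn0 n) b)
    have e3 := corner_diff ω b (hxn0 n) hx
    rw [norm_sub_rev] at e3
    calc τ.toFun (star b * x * b)
        ≤ τ.toFun (star b * xn n * b) + ENNReal.ofReal ‖x - xn n‖ * τ.toFun (star b * b) := e1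
      _ = ω.toFun (star b * xn n * b) + ENNReal.ofReal ‖x - xn n‖ * τ.toFun (star b * b) := by
          rw [e2]
      _ ≤ (ω.toFun (star b * x * b) + ENNReal.ofReal ‖x - xn n‖ * ω.toFun (star b * b))
            + ENNReal.ofReal ‖x - xn n‖ * τ.toFun (star b * b) := by
          exact add_le_add_left e3 _
      _ = ω.toFun (star b * x * b) + ENNReal.ofReal ‖x - xn n‖ * C := by
          rw [hC, mul_add]; ring
  have hlim : Filter.Tendsto (fun n => ω.toFun (star b * x * b) + ENNReal.ofReal ‖x - xn n‖ * C)
      Filter.atTop (nhds (ω.toFun (star b * x * b))) := by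
    have h2 : Filter.Tendsto (fun n => ENNReal.ofReal ‖x - xn n‖ * C) Filter.atTop (nhds 0) := by
      have := ENNReal.Tendsto.mul_const hnt (Or.inr hCfin)
      simpa using this
    have := Filter.Tendsto.const_add (ω.toFun (star b * x * b)) h2
    simpa using this
  exact ge_of_tendsto' hlim hbound

end TWAux

namespace TWAux
variable {A : Type*} [NonUnitalCStarAlgebra A] [PartialOrder A] [StarOrderedRing A]

lemma weight_le (P : Submodule ℂ A) (hP : IsPedersenIdeal P)
    (B : NonUnitalStarSubalgebra ℂ A)
    (hBP : (B : Set A) ⊆ (P : Set A)) (hdense : Dense (B : Set A))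
    (τ ω : TracialWeight A)
    (hagree : ∀ x ∈ B, 0 ≤ x → τ.toFun x = ω.toFun x)
    (x : A) (hx : 0 ≤ x) : τ.toFun x ≤ ω.toFun x := by
  classical
  by_contra hcon
  push_neg at hcon
  obtain ⟨r, hr1, hr2⟩ := exists_between hcon
  -- finiteness on B
  have hfin : ∀ (μ : TracialWeight A), ∀ c : A, c ∈ B → μ.toFun (star c * c) < ⊤ := by
    intro μ c hc
    exact finite_on_pedersen μ hP (hBP (SetLike.mem_coe.mpr (mul_mem (star_mem hc) hc)))
      (star_mul_self_nonneg c)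
  have hx_sa : IsSelfAdjoint x := IsSelfAdjoint.of_nonneg hx
  -- the approximate unit functions
  set g : ℕ → ℝ → ℝ := fun n t => min ((n+1 : ℝ) * t) 1 with hg
  have hgcont : ∀ n, ContinuousOn (g n) (quasispectrum ℝ x) :=
    fun n => ((continuous_const.mul continuous_id).min continuous_const).continuousOn
  have hg0 : ∀ n, g n 0 = 0 := fun n => by simp [hg]
  set e : ℕ → A := fun n => cfcₙ (g n) x with he
  have hsp : ∀ t ∈ quasispectrum ℝ x, 0 ≤ t :=
    fun t ht => quasispectrum_nonneg_of_nonneg x hx t ht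
  have hnorm_e : ∀ n, ‖e n‖ ≤ 1 := by
    intro n
    refine norm_cfcₙ_le fun t ht => ?_
    have ht0 := hsp t ht
    rw [Real.norm_eq_abs, abs_le]
    constructor
    · have : (0:ℝ) ≤ min ((n+1 : ℝ) * t) 1 := le_min (by positivity) (by norm_num)
      linarith
    · exact min_le_right _ _
  -- eₙ x eₙ → x
  have happrox : ∀ n, ‖e n * x * e n - x‖ ≤ 1/(n+1) := by
    intro n
    have h1 : e n * x * e n = cfcₙ (fun t => g n t * t * g n t) x := by
      nth_rewrite 1 [← cfcₙ_id ℝ x]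
      rw [← cfcₙ_mul (g n) id x (hgcont n) (hg0 n) continuousOn_id rfl]
      rw [← cfcₙ_mul _ (g n) x (by exact (hgcont n).mul continuousOn_id)
        (by simp [hg0 n]) (hgcont n) (hg0 n)]
      simp only [id_eq]
    have h2 : e n * x * e n - x = cfcₙ (fun t => g n t * t * g n t - t) x := by
      rw [h1]
      nth_rewrite 2 [← cfcₙ_id ℝ x]
      rw [← cfcₙ_sub _ _ x (by exact ((hgcont n).mul continuousOn_id).mul (hgcont n))
          (by simp [hg0 n]) continuousOn_id rfl]
      simp only [id_eq]
    rw [h2]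
    refine norm_cfcₙ_le fun t ht => ?_
    have ht0 := hsp t ht
    rw [Real.norm_eq_abs]
    rcases le_or_gt ((n+1:ℝ) * t) 1 with hcase | hcase
    · have hmin : g n t = (n+1:ℝ) * t := min_eq_left hcase
      have htle : t ≤ 1/(n+1:ℝ) := by
        rw [le_div_iff₀ (by positivity)]
        linarith [hcase]
      have h01 : 0 ≤ (n+1:ℝ) * t := by positivity
      rw [hmin, abs_le]
      have hge : ((n+1:ℝ)*t) * t * ((n+1:ℝ)*t) ≥ 0 := by positivity
      have h1n : (0:ℝ) ≤ 1/(n+1:ℝ) := by positivity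
      constructor
      · nlinarith
      · nlinarith [mul_nonneg (mul_nonneg ht0 (sub_nonneg.mpr hcase))
          (add_nonneg (by norm_num : (0:ℝ) ≤ 1) h01), h1n]
    · have hmin : g n t = 1 := min_eq_right (le_of_lt hcase)
      rw [hmin]
      simp only [one_mul, mul_one, sub_self, abs_zero]
      positivity
  -- choose approximations from B
  have hexists : ∀ n : ℕ, ∃ c : A, c ∈ (B : Set A) ∧ dist (e n) c < 1/(n+1) := by
    intro n
    obtain ⟨c, hc1, hc2⟩ := Metric.dense_iff.mp hdense (e n) (1/(n+1)) (by positivity)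
    exact ⟨c, hc2, by simpa [dist_comm] using hc1⟩
  choose c hcB hcd using hexists
  have hcd' : ∀ n, ‖c n - e n‖ < 1/(n+1) := by
    intro n
    have := hcd n
    rwa [dist_comm, dist_eq_norm] at this
  have hcnorm : ∀ n, ‖c n‖ ≤ 1 + 1/(n+1) := by
    intro n
    calc ‖c n‖ = ‖e n + (c n - e n)‖ := by congr 1; abel
      _ ≤ ‖e n‖ + ‖c n - e n‖ := norm_add_le _ _
      _ ≤ 1 + 1/(n+1) := add_le_add (hnorm_e n) (le_of_lt (hcd' n))
  set d : ℕ → A := fun n => star (c n) * x * (c n) with hd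
  have hd0 : ∀ n, (0:A) ≤ d n := fun n => star_left_conjugate_nonneg hx (c n)
  -- d n → x
  have hdt : Filter.Tendsto d Filter.atTop (nhds x) := by
    rw [tendsto_iff_norm_sub_tendsto_zero]
    refine squeeze_zero (g := fun n : ℕ => (1/(n+1)) * (4*‖x‖ + 4*‖x‖ + 1))
      (fun n => norm_nonneg _) (fun n => ?_) ?_
    · have hb1 : ‖c n‖ ≤ 2 := by
        refine le_trans (hcnorm n) ?_
        have : (1:ℝ)/(n+1) ≤ 1 := by
          rw [div_le_one (by positivity)]; linarith [Nat.cast_nonneg (α := ℝ) n]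
        linarith
      have hse : star (e n) = e n := (cfcₙ_predicate (g n) x).star_eq
      have key : d n - x = (star (c n) - e n) * (x * c n)
          + e n * x * (c n - e n) + (e n * x * e n - x) := by
        rw [hd]
        simp only [sub_mul, mul_sub, star_sub, hse]
        noncomm_ring
      calc ‖d n - x‖ ≤ ‖(star (c n) - e n) * (x * c n)
            + e n * x * (c n - e n)‖ + ‖e n * x * e n - x‖ := by
            rw [key]; exact norm_add_le _ _
        _ ≤ ‖(star (c n) - e n) * (x * c n)‖ + ‖e n * x * (c n - e n)‖
            + ‖e n * x * e n - x‖ := by gcongr; exact norm_add_le _ _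
        _ ≤ ‖star (c n) - e n‖ * (‖x‖ * ‖c n‖) + ‖e n‖ * ‖x‖ * ‖c n - e n‖ + 1/(n+1) := by
            gcongr
            · exact le_trans (norm_mul_le _ _) (by gcongr; exact norm_mul_le _ _)
            · exact le_trans (norm_mul_le _ _) (by gcongr; exact norm_mul_le _ _)
            · exact happrox n
        _ ≤ (1/(n+1)) * (4*‖x‖ + 4*‖x‖ + 1) := by
            have h1 : ‖star (c n) - e n‖ = ‖c n - e n‖ := by
              rw [show star (c n) - e n = star (c n - e n) by rw [star_sub, hse], norm_star]
            rw [h1]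
            have h2 := (hcd' n).le
            have h3 : (0:ℝ) < 1/(n+1:ℝ) := by positivity
            have h7 : (0:ℝ) ≤ ‖x‖ := norm_nonneg x
            calc ‖c n - e n‖ * (‖x‖ * ‖c n‖) + ‖e n‖ * ‖x‖ * ‖c n - e n‖ + 1/(n+1)
                ≤ (1/(n+1)) * (‖x‖ * 2) + 1 * ‖x‖ * (1/(n+1)) + 1/(n+1) := by
                  gcongr <;> first | exact hb1 | exact hnorm_e n | exact h2
              _ ≤ (1/(n+1)) * (4*‖x‖ + 4*‖x‖ + 1) := by
                  nlinarith [mul_nonneg h3.le h7]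
    · have : Filter.Tendsto (fun n : ℕ => (1:ℝ)/(n+1)) Filter.atTop (nhds 0) :=
        tendsto_one_div_add_atTop_nhds_zero_nat
      have := this.mul_const (4*‖x‖ + 4*‖x‖ + 1)
      simpa using this
  -- lower semicontinuity
  have hev1 : ∀ᶠ n in Filter.atTop, r < τ.toFun (d n) := hdt.eventually (τ.lsc x r hr2)
  -- τ = ω on the d n
  have heq : ∀ n, τ.toFun (d n) = ω.toFun (d n) := by
    intro n
    refine le_antisymm ?_ ?_
    · exact corner_le B hdense τ ω hagree (hcB n) (hfin τ _ (hcB n)) (hfin ω _ (hcB n)) x hx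
    · exact corner_le B hdense ω τ (fun z hz hz0 => (hagree z hz hz0).symm) (hcB n)
        (hfin ω _ (hcB n)) (hfin τ _ (hcB n)) x hx
  -- upper bound for ω (d n)
  have hub : ∀ n, ω.toFun (d n) ≤ ENNReal.ofReal ((1+1/(n+1)) * (1+1/(n+1))) * ω.toFun x := by
    intro n
    refine le_trans (corner_bound ω (c n) x hx) ?_
    refine mul_le_mul_left (ENNReal.ofReal_le_ofReal ?_) _
    have h0 : (0:ℝ) ≤ ‖c n‖ := norm_nonneg _
    have := hcnorm n
    nlinarith
  have hlim : Filter.Tendsto (fun n : ℕ => ENNReal.ofReal ((1+1/(n+1)) * (1+1/(n+1))) * ω.toFun x)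
      Filter.atTop (nhds (ω.toFun x)) := by
    have h1 : Filter.Tendsto (fun n : ℕ => (1+1/(n+1:ℝ)) * (1+1/(n+1:ℝ)))
        Filter.atTop (nhds 1) := by
      have h0 : Filter.Tendsto (fun n : ℕ => 1+1/(n+1:ℝ)) Filter.atTop (nhds 1) := by
        have := tendsto_one_div_add_atTop_nhds_zero_nat.const_add (1:ℝ)
        simpa using this
      have := h0.mul h0
      simpa using this
    have h2 := (ENNReal.continuous_ofReal.tendsto 1).comp h1
    have h3 := ENNReal.Tendsto.mul_const (b := ω.toFun x) h2 (Or.inl (by norm_num))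
    simpa using h3
  have hev2 : ∀ᶠ n : ℕ in Filter.atTop,
      ENNReal.ofReal ((1+1/(n+1)) * (1+1/(n+1))) * ω.toFun x < r :=
    hlim.eventually_lt_const hr1
  obtain ⟨n, h1, h2⟩ := (hev1.and hev2).exists
  have : r < r := lt_of_lt_of_le (lt_of_lt_of_le h1 (le_of_eq (heq n)))
    (le_trans (hub n) (le_of_lt h2))
  exact lt_irrefl r this

end TWAux


/-- **Tracial weights are determined on dense *-subalgebras of the Pedersen ideal.**
Let `B ⊆ Ped(A)` be a dense *-subalgebra of a C*-algebra `A` contained in the Pedersen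
ideal.  If two tracial weights `τ, ω` on `A` agree on `B`, then `τ = ω`. -/
theorem tracial_weights_agree_of_agree_on_dense_subalgebra_of_pedersen
    {A : Type*} [NonUnitalCStarAlgebra A] [PartialOrder A] [StarOrderedRing A]
    (P : Submodule ℂ A) (hP : IsPedersenIdeal P)
    (B : NonUnitalStarSubalgebra ℂ A)
    (hBP : (B : Set A) ⊆ (P : Set A)) (hdense : Dense (B : Set A))
    (τ ω : TracialWeight A)
    (hagree : ∀ x ∈ B, 0 ≤ x → τ.toFun x = ω.toFun x) :
    ∀ x : A, 0 ≤ x → τ.toFun x = ω.toFun x := by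
  intro x hx
  exact le_antisymm
    (TWAux.weight_le P hP B hBP hdense τ ω hagree x hx)
    (TWAux.weight_le P hP B hBP hdense ω τ (fun z hz hz0 => (hagree z hz hz0).symm) x hx)
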